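/- For every b ≥ 1 there exists a regular transition system R_b over the two-letter alphabet {0,1} such that Reach(R_b) = 0* = Ind_{b+1}(R_b), and Ind_b(R_b) strictly contains Reach(R_b); in particular, the configuration 0^b·1 belongs to Ind_b(R_b) but not to Reach(R_b). -/

import Mathlib

/-- A regular transition system: an NFA `I` over `Σ` for the initial
configurations and a transducer (an NFA over `Σ × Σ`) `T` for the transitions. -/
structure RTS (Sig QI QT : Type) where
  I : NFA Sig QI
  T : NFA (Sig × Sig) QT

/-- `w ⇝ u`: the equal-length pair `(w,u)`, identified with the zipped word over
`Σ × Σ`, is accepted by the transducer. -/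
def RTS.Step {Sig QI QT : Type} (R : RTS Sig QI QT) (w u : List Sig) : Prop :=
  w.length = u.length ∧ w.zip u ∈ R.T.accepts

/-- `Reach(R)`: configurations reachable from some initial configuration under the
reflexive-transitive closure of `⇝`. -/
def RTS.Reach {Sig QI QT : Type} (R : RTS Sig QI QT) : Set (List Sig) :=
  { w | ∃ u ∈ R.I.accepts, Relation.ReflTransGen R.Step u w }

/-- A `b`-formula (of length `φ.length`) is a word over the alphabet of
`b`-tuples of subsets of `Σ`. -/
abbrev BFormula (Sig : Type) (b : ℕ) := List (Fin b → Set Sig)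

/-- `w ⊨ φ` iff `|w| ≠ |φ|`, or `|w| = |φ|` and for every clause `i` there is a
position `j` with `w[j] ∈ φ[j]_i`. -/
def BSat {Sig : Type} {b : ℕ} (w : List Sig) (φ : BFormula Sig b) : Prop :=
  w.length ≠ φ.length ∨
    ∀ i : Fin b, ∃ (j : ℕ) (h₁ : j < w.length) (h₂ : j < φ.length),
      w.get ⟨j, h₁⟩ ∈ φ.get ⟨j, h₂⟩ i

/-- A set of configurations is inductive if it is closed under `⇝`. -/
def IsInductiveSet {Sig QI QT : Type} (R : RTS Sig QI QT) (S : Set (List Sig)) : Prop :=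
  ∀ w ∈ S, ∀ u, R.Step w u → u ∈ S

/-- A `b`-formula is inductive if the set of words satisfying it is inductive. -/
def IsInductiveBFormula {Sig QI QT : Type} {b : ℕ} (R : RTS Sig QI QT)
    (φ : BFormula Sig b) : Prop :=
  ∀ w u, BSat w φ → R.Step w u → BSat u φ

/-- `u ⇝_b w`: every inductive `b`-formula satisfied by `u` is satisfied by `w`. -/
def BPotReach {Sig QI QT : Type} (b : ℕ) (R : RTS Sig QI QT) (u w : List Sig) : Prop :=
  ∀ φ : BFormula Sig b, IsInductiveBFormula R φ → BSat u φ → BSat w φ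

/-- `Ind_b(R) = { w : u ⇝_b w for some initial u }`. -/
def Ind {Sig QI QT : Type} (b : ℕ) (R : RTS Sig QI QT) : Set (List Sig) :=
  { w | ∃ u ∈ R.I.accepts, BPotReach b R u w }

/-- A set `S` is `b`-bounded if for every length `ℓ` there is a `b`-formula of
length `ℓ` whose satisfying words of length `ℓ` are exactly `S ∩ Σ^ℓ`. -/
def IsBBounded {Sig : Type} (b : ℕ) (S : Set (List Sig)) : Prop :=
  ∀ ℓ : ℕ, ∃ φ : BFormula Sig b, φ.length = ℓ ∧
    ∀ w : List Sig, w.length = ℓ → (w ∈ S ↔ BSat w φ)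

/-- The language `0*` over the two-letter alphabet `{0,1}` (encoded as `Bool`,
with `0 = false` and `1 = true`). -/
def Zeros : Set (List Bool) := { w | ∀ a ∈ w, a = false }

namespace IndGap

/-! ### The initial NFA, accepting `0*` -/

def nfaI : NFA Bool Unit where
  step := fun _ a => if a = false then {()} else ∅
  start := {()}
  accept := {()}

lemma evalFrom_empty {α σ : Type*} (M : NFA α σ) (x : List α) : M.evalFrom ∅ x = ∅ := by
  induction x with
  | nil => rfl
  | cons a x ih =>
    show M.evalFrom (M.stepSet ∅ a) x = ∅
    rw [M.stepSet_empty]; exact ih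

lemma nfaI_eval (x : List Bool) :
    nfaI.evalFrom {()} x = if (∀ a ∈ x, a = false) then {()} else ∅ := by
  induction x with
  | nil => simp
  | cons a x ih =>
    show nfaI.evalFrom (nfaI.stepSet {()} a) x = _
    have hstep : nfaI.stepSet {()} a = if a = false then {()} else ∅ := by
      ext ⟨⟩
      simp [NFA.stepSet, nfaI]
    cases a with
    | false =>
      rw [hstep, if_pos rfl, ih]
      by_cases h : ∀ a ∈ x, a = false
      · rw [if_pos h, if_pos ?_]
        intro a ha
        rcases List.mem_cons.mp ha with rfl | ha
        · rfl
        · exact h a ha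
      · rw [if_neg h, if_neg fun hall => h fun a ha => hall a (List.mem_cons_of_mem _ ha)]
    | true =>
      rw [hstep, if_neg (by simp), evalFrom_empty,
        if_neg fun hall => by simpa using hall true List.mem_cons_self]

lemma nfaI_accepts : nfaI.accepts = Zeros := by
  ext x
  rw [NFA.mem_accepts]
  have hstart : nfaI.start = {()} := rfl
  rw [hstart, nfaI_eval]
  constructor
  · rintro ⟨⟨⟩, -, hS⟩
    by_cases h : ∀ a ∈ x, a = false
    · exact h
    · rw [if_neg h] at hS
      exact absurd hS (Set.notMem_empty _)
  · intro h
    have h' : ∀ a ∈ x, a = false := h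
    exact ⟨(), rfl, by rw [if_pos h']; rfl⟩

/-! ### The transducer, accepting zipped pairs of length `n` whose first component
contains a `true` -/

def nfaT (n : ℕ) : NFA (Bool × Bool) (Fin (n + 1) × Bool) where
  step := fun q a =>
    { q' | (q.1 : ℕ) < n ∧ (q'.1 : ℕ) = (q.1 : ℕ) + 1 ∧ q'.2 = (q.2 || a.1) }
  start := {(⟨0, Nat.succ_pos n⟩, false)}
  accept := { q | (q.1 : ℕ) = n ∧ q.2 = true }

lemma nfaT_eval (n : ℕ) (x : List (Bool × Bool)) :
    ∀ (k : Fin (n + 1)) (s : Bool) (q : Fin (n + 1) × Bool),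
      q ∈ (nfaT n).evalFrom {(k, s)} x ↔
        ((k : ℕ) + x.length ≤ n ∧ (q.1 : ℕ) = (k : ℕ) + x.length ∧
          q.2 = (s || x.any (·.1))) := by
  induction x with
  | nil =>
    intro k s q
    simp only [NFA.evalFrom_nil, List.length_nil, Nat.add_zero, List.any_nil, Bool.or_false,
      Set.mem_singleton_iff]
    constructor
    · rintro rfl
      exact ⟨Nat.lt_succ_iff.mp k.isLt, rfl, rfl⟩
    · rintro ⟨-, h1, h2⟩
      exact Prod.ext (Fin.ext h1) h2
  | cons a x ih =>
    intro k s q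
    show q ∈ (nfaT n).evalFrom ((nfaT n).stepSet {(k, s)} a) x ↔ _
    by_cases hk : (k : ℕ) < n
    · have hstep : (nfaT n).stepSet {(k, s)} a = {(⟨(k : ℕ) + 1, by omega⟩, s || a.1)} := by
        ext q'
        simp only [NFA.stepSet, Set.mem_iUnion, Set.mem_singleton_iff, exists_prop,
          exists_eq_left]
        constructor
        · rintro ⟨-, h1, h2⟩
          exact Prod.ext (Fin.ext h1) h2
        · rintro rfl
          exact ⟨hk, rfl, rfl⟩
      rw [hstep, ih]
      simp only [List.length_cons, List.any_cons]
      constructor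
      · rintro ⟨h1, h2, h3⟩
        exact ⟨by omega, by omega, by rw [h3, Bool.or_assoc]⟩
      · rintro ⟨h1, h2, h3⟩
        exact ⟨by omega, by omega, by rw [h3, Bool.or_assoc]⟩
    · have hstep : (nfaT n).stepSet {(k, s)} a = ∅ := by
        ext q'
        simp only [NFA.stepSet, Set.mem_iUnion, Set.mem_singleton_iff, exists_prop,
          exists_eq_left, Set.mem_empty_iff_false, iff_false]
        rintro ⟨h, -⟩
        exact hk h
      rw [hstep, evalFrom_empty]
      simp only [Set.mem_empty_iff_false, List.length_cons, false_iff]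
      rintro ⟨h1, -⟩
      omega

lemma nfaT_accepts (n : ℕ) (x : List (Bool × Bool)) :
    x ∈ (nfaT n).accepts ↔ x.length = n ∧ ∃ p ∈ x, p.1 = true := by
  rw [NFA.mem_accepts]
  have hstart : (nfaT n).start = {(⟨0, Nat.succ_pos n⟩, false)} := rfl
  rw [hstart]
  constructor
  · rintro ⟨q, hq, hq2⟩
    rw [nfaT_eval] at hq2
    obtain ⟨h1, h2, h3⟩ := hq2
    obtain ⟨hq1, hq2'⟩ := hq
    simp only [Fin.val_mk, Nat.zero_add] at h1 h2 h3
    refine ⟨by omega, ?_⟩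
    have hx : (false || x.any (·.1)) = true := h3.symm.trans hq2'
    rw [Bool.false_or] at hx
    simpa [List.any_eq_true] using hx
  · rintro ⟨hlen, p, hp, hp1⟩
    refine ⟨(⟨n, Nat.lt_succ_self n⟩, true), ⟨rfl, rfl⟩, ?_⟩
    rw [nfaT_eval]
    refine ⟨by simp [hlen], by simp [hlen], ?_⟩
    have : x.any (·.1) = true := List.any_eq_true.mpr ⟨p, hp, by simp [hp1]⟩
    simp [this]

/-! ### The RTS -/

def Rb (b : ℕ) : RTS Bool Unit (Fin (b + 2) × Bool) :=
  ⟨nfaI, nfaT (b + 1)⟩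

lemma step_iff (b : ℕ) (w u : List Bool) :
    (Rb b).Step w u ↔ w.length = u.length ∧ w.length = b + 1 ∧ ∃ a ∈ w, a = true := by
  constructor
  · rintro ⟨hlen, hacc⟩
    rw [show (Rb b).T = nfaT (b + 1) from rfl, nfaT_accepts] at hacc
    obtain ⟨hzl, p, hp, hp1⟩ := hacc
    rw [List.length_zip, hlen, Nat.min_self] at hzl
    refine ⟨hlen, by omega, p.1, ?_, hp1⟩
    obtain ⟨a, c⟩ := p
    exact (List.of_mem_zip hp).1
  · rintro ⟨hlen, hwl, a, ha, ha1⟩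
    refine ⟨hlen, ?_⟩
    rw [show (Rb b).T = nfaT (b + 1) from rfl, nfaT_accepts]
    refine ⟨by rw [List.length_zip, hlen, Nat.min_self]; omega, ?_⟩
    obtain ⟨j, hj, hja⟩ := List.mem_iff_getElem.mp ha
    refine ⟨(w.zip u)[j]'(by rw [List.length_zip]; omega), List.getElem_mem _, ?_⟩
    rw [List.getElem_zip]
    simpa [hja] using ha1

lemma zeros_no_step {b : ℕ} {w u : List Bool} (hw : w ∈ Zeros) : ¬ (Rb b).Step w u := by
  intro hs
  obtain ⟨-, -, a, ha, ha1⟩ := (step_iff b w u).mp hs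
  have := hw a ha
  simp [this] at ha1

lemma reach_eq (b : ℕ) : (Rb b).Reach = Zeros := by
  ext w
  constructor
  · rintro ⟨u, hu, hsteps⟩
    rw [show (Rb b).I = nfaI from rfl, nfaI_accepts] at hu
    induction hsteps with
    | refl => exact hu
    | tail _ hstep ih => exact absurd hstep (zeros_no_step ih)
  · intro hw
    exact ⟨w, by rw [show (Rb b).I = nfaI from rfl, nfaI_accepts]; exact hw,
      Relation.ReflTransGen.refl⟩

lemma reach_subset_ind (b c : ℕ) : (Rb b).Reach ⊆ Ind c (Rb b) := by
  rintro w ⟨u, hu, hsteps⟩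
  refine ⟨u, hu, fun φ hind hsat => ?_⟩
  induction hsteps with
  | refl => exact hsat
  | tail _ hstep ih => exact hind _ _ ih hstep

/-! ### Formulas -/

/-- The formula of length `b+1` with `b+1` clauses, clause `i` saying "position `i` is `0`";
among words of length `b+1` it is satisfied exactly by `0^{b+1}`. -/
def phistar (b : ℕ) : BFormula Bool (b + 1) :=
  List.ofFn (fun j : Fin (b + 1) => fun i => if (i : ℕ) = (j : ℕ) then {false} else (∅ : Set Bool))

lemma length_phistar (b : ℕ) : (phistar b).length = b + 1 := List.length_ofFn

lemma get_phistar (b : ℕ) (j : ℕ) (h : j < (phistar b).length) (i : Fin (b + 1)) :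
    (phistar b).get ⟨j, h⟩ i = if (i : ℕ) = j then {false} else (∅ : Set Bool) := by
  show (List.ofFn _).get ⟨j, h⟩ i = _
  rw [List.get_ofFn]
  simp [Fin.coe_cast]

lemma bsat_phistar_zeros {b : ℕ} {u : List Bool} (hu : u ∈ Zeros) : BSat u (phistar b) := by
  by_cases hlen : u.length = b + 1
  · right
    intro i
    refine ⟨(i : ℕ), by omega, by rw [length_phistar]; exact i.isLt, ?_⟩
    rw [get_phistar]
    have hg : u.get ⟨(i : ℕ), by omega⟩ = false := hu _ (List.get_mem _ _)
    simp only [hg]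
    simp
  · left
    rw [length_phistar]; exact hlen

lemma not_bsat_phistar {b : ℕ} {w : List Bool} (hw : w.length = b + 1) (p : ℕ)
    (hp : p < w.length) (hpt : w.get ⟨p, hp⟩ = true) : ¬ BSat w (phistar b) := by
  intro h
  rcases h with h | h
  · rw [length_phistar] at h; omega
  · obtain ⟨j, h₁, h₂, hmem⟩ := h ⟨p, by omega⟩
    rw [get_phistar] at hmem
    by_cases hjp : p = j
    · subst hjp
      rw [if_pos rfl] at hmem
      have : w.get ⟨p, h₁⟩ = true := hpt
      rw [this] at hmem
      simp at hmem
    · rw [if_neg (by simpa using hjp)] at hmem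
      exact hmem

/-- A formula of length `ℓ` with `c` clauses, all saying "position `p` is `0`". -/
def phipos (c ℓ p : ℕ) : BFormula Bool c :=
  List.ofFn (fun j : Fin ℓ => fun _ : Fin c => if (j : ℕ) = p then ({false} : Set Bool) else ∅)

lemma length_phipos (c ℓ p : ℕ) : (phipos c ℓ p).length = ℓ := List.length_ofFn

lemma get_phipos (c ℓ p : ℕ) (j : ℕ) (h : j < (phipos c ℓ p).length) (i : Fin c) :
    (phipos c ℓ p).get ⟨j, h⟩ i = if j = p then ({false} : Set Bool) else ∅ := by
  show (List.ofFn _).get ⟨j, h⟩ i = _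
  rw [List.get_ofFn]
  simp [Fin.coe_cast]

lemma bsat_phipos_zeros {c ℓ p : ℕ} (hp : p < ℓ) {u : List Bool} (hu : u ∈ Zeros) :
    BSat u (phipos c ℓ p) := by
  by_cases hlen : u.length = ℓ
  · right
    intro i
    refine ⟨p, by omega, by rw [length_phipos]; omega, ?_⟩
    rw [get_phipos]
    have hg : u.get ⟨p, by omega⟩ = false := hu _ (List.get_mem _ _)
    simp only [hg]
    simp
  · left
    rw [length_phipos]; exact hlen

lemma not_bsat_phipos {c ℓ p : ℕ} (hc : 0 < c) {w : List Bool} (hw : w.length = ℓ)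
    (hp : p < w.length) (hpt : w.get ⟨p, hp⟩ = true) : ¬ BSat w (phipos c ℓ p) := by
  intro h
  rcases h with h | h
  · rw [length_phipos] at h; omega
  · obtain ⟨j, h₁, h₂, hmem⟩ := h ⟨0, hc⟩
    rw [get_phipos] at hmem
    by_cases hjp : j = p
    · subst hjp
      rw [if_pos rfl] at hmem
      have : w.get ⟨j, h₁⟩ = true := hpt
      rw [this] at hmem
      simp at hmem
    · rw [if_neg hjp] at hmem
      exact hmem

lemma inductive_of_length_ne {b c : ℕ} (φ : BFormula Bool c) (h : φ.length ≠ b + 1) :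
    IsInductiveBFormula (Rb b) φ := by
  intro w u _ hstep
  obtain ⟨hlen, hwl, -⟩ := (step_iff b w u).mp hstep
  left
  omega

lemma inductive_phistar (b : ℕ) : IsInductiveBFormula (Rb b) (phistar b) := by
  intro w u hsat hstep
  obtain ⟨hlen, hwl, a, ha, ha1⟩ := (step_iff b w u).mp hstep
  obtain ⟨p, hp, hpa⟩ := List.mem_iff_getElem.mp ha
  exact absurd hsat (not_bsat_phistar hwl p hp (by rw [List.get_eq_getElem, hpa, ha1]))

lemma ind_eq_zeros (b : ℕ) : Ind (b + 1) (Rb b) = Zeros := by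
  ext w
  constructor
  · rintro ⟨u, hu, hpr⟩
    rw [show (Rb b).I = nfaI from rfl, nfaI_accepts] at hu
    by_contra hw
    have hex : ∃ a ∈ w, a = true := by
      simp only [Zeros, Set.mem_setOf_eq] at hw
      push_neg at hw
      obtain ⟨a, ha, ha1⟩ := hw
      exact ⟨a, ha, by simpa using ha1⟩
    obtain ⟨a, ha, ha1⟩ := hex
    obtain ⟨p, hp, hpa⟩ := List.mem_iff_getElem.mp ha
    have hpt : w.get ⟨p, hp⟩ = true := by rw [List.get_eq_getElem, hpa, ha1]
    by_cases hwl : w.length = b + 1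
    · exact not_bsat_phistar hwl p hp hpt
        (hpr (phistar b) (inductive_phistar b) (bsat_phistar_zeros hu))
    · exact not_bsat_phipos (Nat.succ_pos b) rfl hp hpt
        (hpr (phipos (b + 1) w.length p) (inductive_of_length_ne _ (by rw [length_phipos]; omega))
          (bsat_phipos_zeros hp hu))
  · intro hw
    exact reach_subset_ind b (b + 1) ((reach_eq b).symm ▸ hw)

/-! ### The witness `0^b 1` is in `Ind b` -/

/-- The word of length `b+1` with a single `1` at position `j`. -/
def cyc (b j : ℕ) : List Bool := List.ofFn (fun x : Fin (b + 1) => decide ((x : ℕ) = j))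

lemma length_cyc (b j : ℕ) : (cyc b j).length = b + 1 := List.length_ofFn

lemma get_cyc (b j : ℕ) (x : ℕ) (h : x < (cyc b j).length) :
    (cyc b j).get ⟨x, h⟩ = decide (x = j) := by
  show (List.ofFn _).get ⟨x, h⟩ = _
  rw [List.get_ofFn]
  simp [Fin.coe_cast]

lemma witness_length (b : ℕ) : (List.replicate b false ++ [true]).length = b + 1 := by
  simp

lemma witness_mem_ind (b : ℕ) :
    (List.replicate b false ++ [true]) ∈ Ind b (Rb b) := by
  set wb := List.replicate b false ++ [true] with hwb
  have hwbl : wb.length = b + 1 := witness_length b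
  have hwbtrue : ∃ a ∈ wb, a = true := ⟨true, by simp [hwb], rfl⟩
  refine ⟨List.replicate (b + 1) false, ?_, ?_⟩
  · rw [show (Rb b).I = nfaI from rfl, nfaI_accepts]
    intro a ha
    exact List.eq_of_mem_replicate ha
  · intro φ hind hsat
    by_contra hns
    have hns' : ¬ (wb.length ≠ φ.length) ∧
        ¬ ∀ i : Fin b, ∃ (j : ℕ) (h₁ : j < wb.length) (h₂ : j < φ.length),
          wb.get ⟨j, h₁⟩ ∈ φ.get ⟨j, h₂⟩ i := by
      rw [← not_or]; exact hns
    have hφl : φ.length = b + 1 := by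
      have := hns'.1; omega
    -- every cycle word fails φ
    have hfail : ∀ j : Fin (b + 1), ¬ BSat (cyc b (j : ℕ)) φ := by
      intro j hsatj
      apply hns
      apply hind _ _ hsatj
      rw [step_iff]
      refine ⟨by rw [length_cyc, hwbl], by rw [length_cyc], ?_⟩
      refine ⟨(cyc b (j : ℕ)).get ⟨(j : ℕ), by rw [length_cyc]; exact j.isLt⟩,
        List.get_mem _ _, ?_⟩
      rw [get_cyc]
      simp
    have hclause : ∀ j : Fin (b + 1), ∃ i : Fin b,
        ∀ (x : ℕ) (h₁ : x < (cyc b (j : ℕ)).length) (h₂ : x < φ.length),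
          (cyc b (j : ℕ)).get ⟨x, h₁⟩ ∉ φ.get ⟨x, h₂⟩ i := by
      intro j
      have := hfail j
      rw [BSat] at this
      push_neg at this
      exact this.2
    choose c hc using hclause
    obtain ⟨j, j', hjj', hcc⟩ :=
      Fintype.exists_ne_map_eq_of_card_lt c (by simp)
    -- the all-zeros word satisfies clause `c j`
    have hsat' : ∀ i : Fin b, ∃ (j : ℕ) (h₁ : j < (List.replicate (b + 1) false).length)
        (h₂ : j < φ.length), (List.replicate (b + 1) false).get ⟨j, h₁⟩ ∈ φ.get ⟨j, h₂⟩ i := by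
      rcases hsat with h | h
      · exfalso; rw [List.length_replicate] at h; omega
      · exact h
    obtain ⟨x, hx₁, hx₂, hmem⟩ := hsat' (c j)
    rw [List.length_replicate] at hx₁
    have hgf : (List.replicate (b + 1) false).get ⟨x, by simpa using hx₁⟩ = false :=
      by simp
    rw [hgf] at hmem
    -- but `false ∉ φ[x]_{c j}` since `x ≠ j` or `x ≠ j'`
    by_cases hxj : x = (j : ℕ)
    · have hxj' : x ≠ (j' : ℕ) := fun h => hjj' (Fin.ext (by omega))
      have hthis := hc j' x (by rw [length_cyc]; omega) hx₂
      rw [get_cyc] at hthis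
      rw [hcc] at hmem
      apply hthis
      simpa [hxj'] using hmem
    · have hthis := hc j x (by rw [length_cyc]; omega) hx₂
      rw [get_cyc] at hthis
      apply hthis
      simpa [hxj] using hmem

lemma witness_not_reach (b : ℕ) : (List.replicate b false ++ [true]) ∉ (Rb b).Reach := by
  rw [reach_eq]
  intro h
  have : (true : Bool) = false := h true (by simp)
  simp at this

end IndGap


/-- Example `ex:ladder`: for every `b ≥ 1` there is an RTS `R_b`
over `{0,1}` with `Reach(R_b) = 0* = Ind_{b+1}(R_b)` and
`Reach(R_b) ⊊ Ind_b(R_b)`; in particular `0^b · 1 ∈ Ind_b(R_b) \ Reach(R_b)`. -/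
theorem exists_rts_with_Ind_gap :
    ∀ b : ℕ, 1 ≤ b →
      ∃ (QI QT : Type) (_ : Fintype QI) (_ : Fintype QT) (R : RTS Bool QI QT),
        R.Reach = Zeros ∧
        Ind (b + 1) R = Zeros ∧
        R.Reach ⊂ Ind b R ∧
        (List.replicate b false ++ [true]) ∈ Ind b R ∧
        (List.replicate b false ++ [true]) ∉ R.Reach := by
  intro b _
  refine ⟨Unit, Fin (b + 2) × Bool, inferInstance, inferInstance, IndGap.Rb b,
    IndGap.reach_eq b, IndGap.ind_eq_zeros b, ?_, IndGap.witness_mem_ind b,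
    IndGap.witness_not_reach b⟩
  rw [Set.ssubset_iff_of_subset (IndGap.reach_subset_ind b b)]
  exact ⟨_, IndGap.witness_mem_ind b, IndGap.witness_not_reach b⟩
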